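/- Let T have the log-normal density f_T(t) = (1/(t√(8πσ²)))·exp(−(ln t + 2σ²)²/(8σ²)) on (0,∞), let G have the density f_G(g) = (ξ²/h₀^{ξ²})·g^{ξ²−1} on [0, h₀], with T and G independent, and let p > 0, C_d = h₀·p, C_e = 2σ²(1 + 2ξ²). Then H = p·T·G has density f_H(h) = (ξ² h^{ξ²−1} / (2 C_d^{ξ²})) · exp(2σ²ξ²(1+ξ²)) · erfc( (ln(h/C_d) + C_e) / √(8σ²) ) for h > 0. -/

import Mathlib

open Real MeasureTheory

/-- The complementary error function `erfc(x) = (2/√π)∫_x^∞ e^{−t²} dt`. -/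
noncomputable def erfc (x : ℝ) : ℝ :=
  2 / Real.sqrt π * ∫ t in Set.Ioi x, Real.exp (-t ^ 2)

open Set
open scoped ENNReal

lemma lintegral_image_eq_lintegral_abs_deriv_mul' {s : Set ℝ} {f : ℝ → ℝ} {f' : ℝ → ℝ}
    (hs : MeasurableSet s) (hf' : ∀ x ∈ s, HasDerivWithinAt f (f' x) s x)
    (hf : Set.InjOn f s) (g : ℝ → ℝ≥0∞) :
    ∫⁻ x in f '' s, g x = ∫⁻ x in s, ENNReal.ofReal |f' x| * g (f x) := by
  simpa only [ContinuousLinearMap.det_toSpanSingleton] using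
    lintegral_image_eq_lintegral_abs_det_fderiv_mul volume hs
      (fun x hx => (hf' x hx).hasFDerivWithinAt) hf g

lemma key_lintegral (σ ξ p h₀ h : ℝ) (hσ : 0 < σ) (hξ : 0 < ξ) (hp : 0 < p)
    (hh₀ : 0 < h₀) (hh : 0 < h) :
    ∫⁻ t in Ioi (0:ℝ),
      ENNReal.ofReal (if 0 < t then
          1 / (t * Real.sqrt (8 * π * σ ^ 2)) *
            Real.exp (-(Real.log t + 2 * σ ^ 2) ^ 2 / (8 * σ ^ 2)) else 0) *
      (ENNReal.ofReal (p * t)⁻¹ *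
        ENNReal.ofReal (if h / (p * t) ∈ Set.Icc (0 : ℝ) h₀ then
          ξ ^ 2 / h₀ ^ (ξ ^ 2 : ℝ) * (h / (p * t)) ^ (ξ ^ 2 - 1 : ℝ) else 0))
    = ENNReal.ofReal
        (ξ ^ 2 * h ^ (ξ ^ 2 - 1 : ℝ) / (2 * (h₀ * p) ^ (ξ ^ 2 : ℝ)) *
          Real.exp (2 * σ ^ 2 * ξ ^ 2 * (1 + ξ ^ 2)) *
          erfc ((Real.log (h / (h₀ * p)) + 2 * σ ^ 2 * (1 + 2 * ξ ^ 2)) /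
            Real.sqrt (8 * σ ^ 2))) := by
  set a : ℝ := Real.sqrt (8 * σ ^ 2) with ha_def
  have ha : 0 < a := Real.sqrt_pos.mpr (by positivity)
  have ha2 : a ^ 2 = 8 * σ ^ 2 := Real.sq_sqrt (by positivity)
  set Ce : ℝ := 2 * σ ^ 2 * (1 + 2 * ξ ^ 2) with hCe_def
  set c : ℝ := h / (h₀ * p) with hc_def
  have hc : 0 < c := by positivity
  set s0 : ℝ := (Real.log c + Ce) / a with hs0_def
  set K : ℝ := 2 * σ ^ 2 * ξ ^ 2 * (1 + ξ ^ 2) with hK_def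
  set Cst : ℝ := ξ ^ 2 * h ^ (ξ ^ 2 - 1 : ℝ) / (2 * (h₀ * p) ^ (ξ ^ 2 : ℝ)) *
      Real.exp K * (2 / Real.sqrt π) with hCst_def
  have hsq8 : Real.sqrt (8 * π * σ ^ 2) = Real.sqrt π * a := by
    rw [show (8:ℝ) * π * σ ^ 2 = π * (8 * σ ^ 2) by ring, Real.sqrt_mul pi_pos.le]
  set f : ℝ → ℝ≥0∞ := fun t =>
      ENNReal.ofReal (if 0 < t then
          1 / (t * Real.sqrt (8 * π * σ ^ 2)) *
            Real.exp (-(Real.log t + 2 * σ ^ 2) ^ 2 / (8 * σ ^ 2)) else 0) *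
      (ENNReal.ofReal (p * t)⁻¹ *
        ENNReal.ofReal (if h / (p * t) ∈ Set.Icc (0 : ℝ) h₀ then
          ξ ^ 2 / h₀ ^ (ξ ^ 2 : ℝ) * (h / (p * t)) ^ (ξ ^ 2 - 1 : ℝ) else 0)) with hf_def
  -- integrand vanishes off Ici c
  have hvanish : ∀ t : ℝ, t ∉ Ici c → f t = 0 := by
    intro t ht
    simp only [mem_Ici, not_le] at ht
    rcases le_or_gt t 0 with h0 | h0
    · simp only [hf_def, if_neg (not_lt.mpr h0), ENNReal.ofReal_zero, zero_mul]
    · have hpt : 0 < p * t := by positivity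
      have : h₀ < h / (p * t) := by
        rw [lt_div_iff₀ hpt]
        calc h₀ * (p * t) < h₀ * (p * c) := by
              apply mul_lt_mul_of_pos_left _ hh₀
              exact mul_lt_mul_of_pos_left ht hp
          _ = h := by rw [hc_def]; field_simp
      have hmem : h / (p * t) ∉ Set.Icc (0:ℝ) h₀ := by
        simp only [Set.mem_Icc, not_and, not_le]
        exact fun _ => this
      have hz : (if h / (p * t) ∈ Set.Icc (0:ℝ) h₀ then
          ξ ^ 2 / h₀ ^ (ξ ^ 2 : ℝ) * (h / (p * t)) ^ (ξ ^ 2 - 1 : ℝ) else 0) = 0 := if_neg hmem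
      simp only [hf_def, hz, ENNReal.ofReal_zero, mul_zero]
  -- step 1 : reduce to Ioi c
  have step1 : ∫⁻ t in Ioi (0:ℝ), f t = ∫⁻ t in Ioi c, f t := by
    have : ∀ t, f t = (Ici c).indicator f t := by
      intro t
      by_cases ht : t ∈ Ici c
      · rw [indicator_of_mem ht]
      · rw [indicator_of_notMem ht, hvanish t ht]
    rw [lintegral_congr this, lintegral_indicator measurableSet_Ici,
      Measure.restrict_restrict measurableSet_Ici,
      show Ici c ∩ Ioi 0 = Ici c from inter_eq_left.mpr fun x hx => lt_of_lt_of_le hc hx,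
      restrict_Ioi_eq_restrict_Ici]
  -- the plain density on Ioi c
  set G : ℝ → ℝ := fun t => 1 / (t * Real.sqrt (8 * π * σ ^ 2)) *
      Real.exp (-(Real.log t + 2 * σ ^ 2) ^ 2 / (8 * σ ^ 2)) *
      ((p * t)⁻¹ * (ξ ^ 2 / h₀ ^ (ξ ^ 2 : ℝ) * (h / (p * t)) ^ (ξ ^ 2 - 1 : ℝ))) with hG_def
  have step2 : ∫⁻ t in Ioi c, f t = ∫⁻ t in Ioi c, ENNReal.ofReal (G t) := by
    apply setLIntegral_congr_fun measurableSet_Ioi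
    intro t ht
    have htpos : 0 < t := hc.trans ht
    have hpt : 0 < p * t := by positivity
    have hmem : h / (p * t) ∈ Set.Icc (0:ℝ) h₀ := by
      constructor
      · positivity
      · rw [div_le_iff₀ hpt]
        have : h = c * (h₀ * p) := by rw [hc_def]; field_simp
        rw [this]
        calc c * (h₀ * p) ≤ t * (h₀ * p) := by
              apply mul_le_mul_of_nonneg_right (le_of_lt ht) (by positivity)
          _ = h₀ * (p * t) := by ring
    have h1 : (0:ℝ) ≤ 1 / (t * Real.sqrt (8 * π * σ ^ 2)) *
        Real.exp (-(Real.log t + 2 * σ ^ 2) ^ 2 / (8 * σ ^ 2)) := by positivity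
    simp only [hf_def, hG_def, if_pos htpos, if_pos hmem]
    rw [← ENNReal.ofReal_mul (by positivity : (0:ℝ) ≤ (p*t)⁻¹), ← ENNReal.ofReal_mul h1]
  -- change of variables t = exp (a * s - Ce)
  have himg : (fun s => Real.exp (a * s - Ce)) '' Ioi s0 = Ioi c := by
    ext x
    simp only [mem_image, mem_Ioi]
    constructor
    · rintro ⟨s, hs, rfl⟩
      have : a * s0 - Ce < a * s - Ce := by
        have := mul_lt_mul_of_pos_left hs ha
        linarith
      have h2 : a * s0 - Ce = Real.log c := by
        rw [hs0_def]; field_simp; ring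
      calc c = Real.exp (Real.log c) := (Real.exp_log hc).symm
        _ < Real.exp (a * s - Ce) := Real.exp_lt_exp.mpr (h2 ▸ this)
    · intro hx
      have hxpos : 0 < x := hc.trans hx
      refine ⟨(Real.log x + Ce) / a, ?_, ?_⟩
      · rw [hs0_def, div_lt_div_iff_of_pos_right ha]
        have := Real.log_lt_log hc hx
        nlinarith
      · rw [show a * ((Real.log x + Ce) / a) - Ce = Real.log x by field_simp; ring, Real.exp_log hxpos]
  have hderiv : ∀ x ∈ Ioi s0, HasDerivWithinAt (fun s => Real.exp (a * s - Ce))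
      (Real.exp (a * x - Ce) * a) (Ioi s0) x := by
    intro x _
    have : HasDerivAt (fun s => Real.exp (a * s - Ce)) (Real.exp (a * x - Ce) * a) x := by
      simpa using (((hasDerivAt_id x).const_mul a).sub_const Ce).exp
    exact this.hasDerivWithinAt
  have hinj : Set.InjOn (fun s => Real.exp (a * s - Ce)) (Ioi s0) := by
    intro x _ y _ hxy
    have := Real.exp_injective hxy
    have : a * x = a * y := by linarith [sub_left_inj.mp this]
    exact mul_left_cancel₀ ha.ne' this
  have step3 : ∫⁻ t in Ioi c, ENNReal.ofReal (G t)
      = ∫⁻ s in Ioi s0, ENNReal.ofReal |Real.exp (a * s - Ce) * a| *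
          ENNReal.ofReal (G (Real.exp (a * s - Ce))) := by
    rw [← himg, lintegral_image_eq_lintegral_abs_deriv_mul' measurableSet_Ioi hderiv hinj]
  -- pointwise identity
  have hpoint : ∀ s : ℝ, |Real.exp (a * s - Ce) * a| * G (Real.exp (a * s - Ce))
      = Cst * Real.exp (-s ^ 2) := by
    intro s
    set E : ℝ := Real.exp (a * s - Ce) with hE_def
    have hE : 0 < E := Real.exp_pos _
    have habs : |E * a| = E * a := abs_of_pos (by positivity)
    have hXid : -(a * s - Ce + 2 * σ ^ 2) ^ 2 / (8 * σ ^ 2)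
        = -s ^ 2 + K + (a * s - Ce) * ξ ^ 2 := by
      rw [hCe_def, hK_def]
      have h8 : (8:ℝ) * σ ^ 2 ≠ 0 := by positivity
      field_simp
      linear_combination (-s ^ 2) * ha2
    have hsπ : (0:ℝ) < Real.sqrt π := Real.sqrt_pos.mpr pi_pos
    rw [hG_def]
    simp only
    rw [habs, Real.log_exp, hsq8, hXid, Real.exp_add, Real.exp_add,
      Real.div_rpow hh.le (by positivity : (0:ℝ) ≤ p * E),
      Real.rpow_sub (by positivity : (0:ℝ) < p * E), Real.rpow_one,
      Real.mul_rpow hp.le hE.le,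
      show E ^ (ξ ^ 2 : ℝ) = Real.exp ((a * s - Ce) * ξ ^ 2) by
        rw [hE_def, Real.rpow_def_of_pos (Real.exp_pos _), Real.log_exp],
      hCst_def, Real.mul_rpow hh₀.le hp.le]
    have e1 : Real.exp ((a * s - Ce) * ξ ^ 2) ≠ 0 := (Real.exp_pos _).ne'
    have e2 : (h₀:ℝ) ^ (ξ ^ 2 : ℝ) ≠ 0 := by positivity
    have e3 : (p:ℝ) ^ (ξ ^ 2 : ℝ) ≠ 0 := by positivity
    field_simp
  have step4 : ∫⁻ s in Ioi s0, ENNReal.ofReal |Real.exp (a * s - Ce) * a| *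
      ENNReal.ofReal (G (Real.exp (a * s - Ce)))
      = ∫⁻ s in Ioi s0, ENNReal.ofReal (Cst * Real.exp (-s ^ 2)) := by
    apply lintegral_congr
    intro s
    rw [← ENNReal.ofReal_mul (abs_nonneg _), hpoint s]
  have hCst_nonneg : 0 ≤ Cst := by rw [hCst_def]; positivity
  have hint : Integrable (fun s : ℝ => Real.exp (-s ^ 2))
      (volume.restrict (Ioi s0)) := by
    have : Integrable (fun s : ℝ => Real.exp (-s ^ 2)) := by
      simpa using integrable_exp_neg_mul_sq one_pos
    exact this.restrict
  have step5 : ∫⁻ s in Ioi s0, ENNReal.ofReal (Cst * Real.exp (-s ^ 2))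
      = ENNReal.ofReal (Cst * ∫ s in Ioi s0, Real.exp (-s ^ 2)) := by
    have hmeas : Measurable fun s : ℝ => ENNReal.ofReal (Real.exp (-s ^ 2)) :=
      (Real.measurable_exp.comp ((measurable_id.pow_const 2).neg)).ennreal_ofReal
    calc ∫⁻ s in Ioi s0, ENNReal.ofReal (Cst * Real.exp (-s ^ 2))
        = ∫⁻ s in Ioi s0, ENNReal.ofReal Cst * ENNReal.ofReal (Real.exp (-s ^ 2)) := by
          simp_rw [ENNReal.ofReal_mul hCst_nonneg]
      _ = ENNReal.ofReal Cst * ∫⁻ s in Ioi s0, ENNReal.ofReal (Real.exp (-s ^ 2)) :=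
          lintegral_const_mul _ hmeas
      _ = ENNReal.ofReal Cst * ENNReal.ofReal (∫ s in Ioi s0, Real.exp (-s ^ 2)) := by
          rw [← ofReal_integral_eq_lintegral_ofReal hint
            (ae_of_all _ fun x => (Real.exp_pos _).le)]
      _ = ENNReal.ofReal (Cst * ∫ s in Ioi s0, Real.exp (-s ^ 2)) :=
          (ENNReal.ofReal_mul hCst_nonneg).symm
  rw [step1, step2, step3, step4, step5]
  congr 1
  rw [hCst_def, erfc]
  ring


lemma scale_lintegral {c : ℝ} (hc : 0 < c) {fG' : ℝ → ℝ≥0∞} (hfG' : Measurable fG')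
    {A : Set ℝ} (hA : MeasurableSet A) :
    ∫⁻ g in (fun g => c * g) ⁻¹' A, fG' g
      = ENNReal.ofReal c⁻¹ * ∫⁻ x in A, fG' (x / c) := by
  have h1 : ∫⁻ x in A, fG' (x / c) ∂(Measure.map (c * ·) volume)
      = ∫⁻ g in (fun g => c * g) ⁻¹' A, fG' ((c * g) / c) :=
    setLIntegral_map hA (hfG'.comp (measurable_id.div_const c)) (measurable_const_mul c)
  simp_rw [mul_div_cancel_left₀ _ (ne_of_gt hc)] at h1
  rw [← h1, Real.map_volume_mul_left (ne_of_gt hc), Measure.restrict_smul,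
    lintegral_smul_measure, abs_of_pos (inv_pos.mpr hc), smul_eq_mul]



/-- Closed-form weak-turbulence direct-channel density (Eq. (10) of the paper):
if `T` is log-normal with density `(1/(t√(8πσ²)))·exp(−(ln t + 2σ²)²/(8σ²))`,
`G` has the pointing-error density `(ξ²/h₀^{ξ²})·g^{ξ²−1}` on `[0, h₀]`, `T, G`
independent, and `p > 0`, then `H = p·T·G` has density
`(ξ² h^{ξ²−1}/(2 C_d^{ξ²}))·exp(2σ²ξ²(1+ξ²))·erfc((ln(h/C_d)+C_e)/√(8σ²))`
for `h > 0`, where `C_d = h₀·p` and `C_e = 2σ²(1+2ξ²)`. -/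
theorem weak_turbulence_direct_density {Ω : Type*} [MeasurableSpace Ω]
    (P : Measure Ω) [IsProbabilityMeasure P]
    (T G : Ω → ℝ) (σ ξ p h₀ : ℝ)
    (hσ : 0 < σ) (hξ : 0 < ξ) (hp : 0 < p) (hh₀ : 0 < h₀)
    (hT : Measurable T) (hG : Measurable G)
    (hTd : Measure.map T P = volume.withDensity fun t => ENNReal.ofReal
      (if 0 < t then
        1 / (t * Real.sqrt (8 * π * σ ^ 2)) *
          Real.exp (-(Real.log t + 2 * σ ^ 2) ^ 2 / (8 * σ ^ 2))
      else 0))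
    (hGd : Measure.map G P = volume.withDensity fun g => ENNReal.ofReal
      (if g ∈ Set.Icc (0 : ℝ) h₀ then
        ξ ^ 2 / h₀ ^ (ξ ^ 2 : ℝ) * g ^ (ξ ^ 2 - 1 : ℝ)
      else 0))
    (hindep : ProbabilityTheory.IndepFun T G P) :
    (Measure.map (fun ω => p * T ω * G ω) P).restrict (Set.Ioi 0)
      = (volume.withDensity fun h => ENNReal.ofReal
          (ξ ^ 2 * h ^ (ξ ^ 2 - 1 : ℝ) / (2 * (h₀ * p) ^ (ξ ^ 2 : ℝ)) *
            Real.exp (2 * σ ^ 2 * ξ ^ 2 * (1 + ξ ^ 2)) *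
            erfc ((Real.log (h / (h₀ * p)) + 2 * σ ^ 2 * (1 + 2 * ξ ^ 2)) /
              Real.sqrt (8 * σ ^ 2)))).restrict (Set.Ioi 0) := by
  classical
  have hμT : IsProbabilityMeasure (Measure.map T P) := Measure.isProbabilityMeasure_map hT.aemeasurable
  have hμG : IsProbabilityMeasure (Measure.map G P) := Measure.isProbabilityMeasure_map hG.aemeasurable
  set fT' : ℝ → ℝ≥0∞ := fun t => ENNReal.ofReal
      (if 0 < t then
        1 / (t * Real.sqrt (8 * π * σ ^ 2)) *
          Real.exp (-(Real.log t + 2 * σ ^ 2) ^ 2 / (8 * σ ^ 2))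
      else 0) with hfT'_def
  set fG' : ℝ → ℝ≥0∞ := fun g => ENNReal.ofReal
      (if g ∈ Set.Icc (0 : ℝ) h₀ then
        ξ ^ 2 / h₀ ^ (ξ ^ 2 : ℝ) * g ^ (ξ ^ 2 - 1 : ℝ)
      else 0) with hfG'_def
  have hfT'm : Measurable fT' := by
    apply Measurable.ennreal_ofReal
    exact Measurable.ite measurableSet_Ioi
      ((measurable_const.div (measurable_id.mul_const _)).mul
        (Real.measurable_exp.comp
          (((Real.measurable_log.add_const _).pow_const 2).neg.div_const _)))
      measurable_const
  have hfG'm : Measurable fG' := by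
    apply Measurable.ennreal_ofReal
    exact Measurable.ite measurableSet_Icc
      (measurable_const.mul (measurable_id.pow_const _)) measurable_const
  have hm : Measurable (fun q : ℝ × ℝ => p * q.1 * q.2) :=
    (measurable_const.mul measurable_fst).mul measurable_snd
  have hprod := (ProbabilityTheory.indepFun_iff_map_prod_eq_prod_map_map
    hT.aemeasurable hG.aemeasurable).mp hindep
  have hmapeq : Measure.map (fun ω => p * T ω * G ω) P
      = Measure.map (fun q : ℝ × ℝ => p * q.1 * q.2)
          ((Measure.map T P).prod (Measure.map G P)) := by
    rw [← hprod, Measure.map_map hm (hT.prodMk hG)]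
    rfl
  ext s hs
  rw [Measure.restrict_apply hs, Measure.restrict_apply hs,
    withDensity_apply _ (hs.inter measurableSet_Ioi)]
  set A := s ∩ Ioi (0:ℝ) with hA_def
  have hA : MeasurableSet A := hs.inter measurableSet_Ioi
  rw [hmapeq, Measure.map_apply hm hA, Measure.prod_apply (hm hA), hTd,
    lintegral_withDensity_eq_lintegral_mul volume hfT'm
      (measurable_measure_prodMk_left (hm hA))]
  have hpre : ∀ t : ℝ,
      (Prod.mk t ⁻¹' ((fun q : ℝ × ℝ => p * q.1 * q.2) ⁻¹' A))
        = (fun g => (p * t) * g) ⁻¹' A := fun t => rfl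
  have step_a : ∀ t : ℝ,
      fT' t * (Measure.map G P) (Prod.mk t ⁻¹' ((fun q : ℝ × ℝ => p * q.1 * q.2) ⁻¹' A))
      = (Ioi (0:ℝ)).indicator
          (fun t => fT' t * (ENNReal.ofReal (p * t)⁻¹ * ∫⁻ x in A, fG' (x / (p * t)))) t := by
    intro t
    by_cases ht : t ∈ Ioi (0:ℝ)
    · rw [Set.indicator_of_mem ht]
      congr 1
      rw [hpre t, hGd, withDensity_apply _ ((measurable_const_mul (p * t)) hA),
        scale_lintegral (mul_pos hp ht) hfG'm hA]
    · rw [Set.indicator_of_notMem ht]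
      have h0 : fT' t = 0 := by
        simp only [hfT'_def, if_neg (by simpa using ht : ¬ (0:ℝ) < t), ENNReal.ofReal_zero]
      rw [h0, zero_mul]
  have humeas : Measurable (Function.uncurry fun t x =>
      fT' t * (ENNReal.ofReal (p * t)⁻¹ * fG' (x / (p * t)))) := by
    show Measurable ((fun q : ℝ × ℝ => fT' q.1) * fun q : ℝ × ℝ => ENNReal.ofReal (p * q.1)⁻¹ * fG' (q.2 / (p * q.1)))
    apply Measurable.mul
    · exact hfT'm.comp measurable_fst
    · show Measurable ((fun q : ℝ × ℝ => ENNReal.ofReal (p * q.1)⁻¹) * fun q : ℝ × ℝ => fG' (q.2 / (p * q.1)))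
      apply Measurable.mul
      · exact ((measurable_const.mul measurable_fst).inv).ennreal_ofReal
      · exact hfG'm.comp (measurable_snd.div (measurable_const.mul measurable_fst))
  calc ∫⁻ t, (fT' * fun t =>
        (Measure.map G P) (Prod.mk t ⁻¹' ((fun q : ℝ × ℝ => p * q.1 * q.2) ⁻¹' A))) t
      = ∫⁻ t, (Ioi (0:ℝ)).indicator
          (fun t => fT' t * (ENNReal.ofReal (p * t)⁻¹ * ∫⁻ x in A, fG' (x / (p * t)))) t :=
        lintegral_congr step_a
    _ = ∫⁻ t in Ioi (0:ℝ), fT' t * (ENNReal.ofReal (p * t)⁻¹ * ∫⁻ x in A, fG' (x / (p * t))) :=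
        lintegral_indicator measurableSet_Ioi _
    _ = ∫⁻ t in Ioi (0:ℝ), ∫⁻ x in A,
          fT' t * (ENNReal.ofReal (p * t)⁻¹ * fG' (x / (p * t))) := by
        apply lintegral_congr
        intro t
        rw [← mul_assoc,
          ← lintegral_const_mul (fT' t * ENNReal.ofReal (p * t)⁻¹)
            (show Measurable fun x : ℝ => fG' (x / (p * t)) from
              hfG'm.comp (measurable_id.div_const (p * t)))]
        simp_rw [mul_assoc]
    _ = ∫⁻ x in A, ∫⁻ t in Ioi (0:ℝ),
          fT' t * (ENNReal.ofReal (p * t)⁻¹ * fG' (x / (p * t))) :=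
        lintegral_lintegral_swap humeas.aemeasurable
    _ = ∫⁻ x in A, ENNReal.ofReal
          (ξ ^ 2 * x ^ (ξ ^ 2 - 1 : ℝ) / (2 * (h₀ * p) ^ (ξ ^ 2 : ℝ)) *
            Real.exp (2 * σ ^ 2 * ξ ^ 2 * (1 + ξ ^ 2)) *
            erfc ((Real.log (x / (h₀ * p)) + 2 * σ ^ 2 * (1 + 2 * ξ ^ 2)) /
              Real.sqrt (8 * σ ^ 2))) := by
        apply setLIntegral_congr_fun hA
        intro x hx
        exact key_lintegral σ ξ p h₀ x hσ hξ hp hh₀ hx.2
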